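/- arXiv:0705.0167 — 2 statements merged into one kernel-verified Lean document; each statement's English description precedes it below -/
import Mathlib

section
/- Let A, A* be a tridiagonal pair on V with diameter d. Then V = U^{↓↑}_0 + U^{↓↑}_1 + ⋯ + U^{↓↑}_d is a direct sum, where U^{↓↑}_i = (V*_0 + ⋯ + V*_i) ∩ (V_i + ⋯ + V_d) for 0 ≤ i ≤ d. -/
noncomputable section

open Module

/-- The `i`-th eigenspace in an ordering `θ 0, …, θ d` of the eigenvalues of `A`,
with the convention that it is `⊥` for `i > d` (so `V_{d+1} = 0`). -/
def evSp {V : Type*} [AddCommGroup V] [Module ℂ V]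
    (A : Module.End ℂ V) (θ : ℕ → ℂ) (d : ℕ) (i : ℕ) : Submodule ℂ V :=
  if i ≤ d then A.eigenspace (θ i) else ⊥

/-- A tridiagonal pair `A, A*` on `V`: both maps are diagonalizable, there are orderings
`V_0, …, V_d` (with eigenvalues `θ 0, …, θ d`) of the eigenspaces of `A` and
`V*_0, …, V*_δ` (with eigenvalues `ψ 0, …, ψ δ`) of the eigenspaces of `A*`
satisfying the tridiagonal conditions (with `V_{-1} = 0`, `V_{d+1} = 0`,
`V*_{-1} = 0`, `V*_{δ+1} = 0`), and the pair is irreducible. -/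
structure TDPair (V : Type*) [AddCommGroup V] [Module ℂ V] where
  A : Module.End ℂ V
  Astar : Module.End ℂ V
  d : ℕ
  δ : ℕ
  θ : ℕ → ℂ
  ψ : ℕ → ℂ
  θ_inj : ∀ i ≤ d, ∀ j ≤ d, θ i = θ j → i = j
  ψ_inj : ∀ i ≤ δ, ∀ j ≤ δ, ψ i = ψ j → i = j
  eigA_ne : ∀ i ≤ d, A.eigenspace (θ i) ≠ ⊥
  eigAstar_ne : ∀ i ≤ δ, Astar.eigenspace (ψ i) ≠ ⊥
  eigA_all : ∀ μ : ℂ, A.eigenspace μ ≠ ⊥ → ∃ i ≤ d, μ = θ i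
  eigAstar_all : ∀ μ : ℂ, Astar.eigenspace μ ≠ ⊥ → ∃ i ≤ δ, μ = ψ i
  diagA : ⨆ i ∈ Finset.range (d + 1), A.eigenspace (θ i) = ⊤
  diagAstar : ⨆ i ∈ Finset.range (δ + 1), Astar.eigenspace (ψ i) = ⊤
  triA : ∀ i ≤ d, Submodule.map Astar (evSp A θ d i) ≤
      evSp A θ d (i - 1) ⊔ evSp A θ d i ⊔ evSp A θ d (i + 1)
  triAstar : ∀ i ≤ δ, Submodule.map A (evSp Astar ψ δ i) ≤
      evSp Astar ψ δ (i - 1) ⊔ evSp Astar ψ δ i ⊔ evSp Astar ψ δ (i + 1)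
  irred : ∀ W : Submodule ℂ V, Submodule.map A W ≤ W → Submodule.map Astar W ≤ W →
      W = ⊥ ∨ W = ⊤

/-- `U^{↓↓}_i = (V*_0 + ⋯ + V*_i) ∩ (V_0 + ⋯ + V_{d-i})`. -/
def Udd {V : Type*} [AddCommGroup V] [Module ℂ V] (P : TDPair V) (i : ℕ) : Submodule ℂ V :=
  (⨆ k ∈ Finset.range (i + 1), P.Astar.eigenspace (P.ψ k)) ⊓
  (⨆ k ∈ Finset.range (P.d - i + 1), P.A.eigenspace (P.θ k))

/-- `U^{↑↓}_i = (V*_{d-i} + ⋯ + V*_d) ∩ (V_0 + ⋯ + V_{d-i})`. -/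
def Uud {V : Type*} [AddCommGroup V] [Module ℂ V] (P : TDPair V) (i : ℕ) : Submodule ℂ V :=
  (⨆ k ∈ Finset.Icc (P.d - i) P.d, P.Astar.eigenspace (P.ψ k)) ⊓
  (⨆ k ∈ Finset.range (P.d - i + 1), P.A.eigenspace (P.θ k))

/-- `U^{↓↑}_i = (V*_0 + ⋯ + V*_i) ∩ (V_i + ⋯ + V_d)`. -/
def Udu {V : Type*} [AddCommGroup V] [Module ℂ V] (P : TDPair V) (i : ℕ) : Submodule ℂ V :=
  (⨆ k ∈ Finset.range (i + 1), P.Astar.eigenspace (P.ψ k)) ⊓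
  (⨆ k ∈ Finset.Icc i P.d, P.A.eigenspace (P.θ k))

/-- `U^{↑↑}_i = (V*_{d-i} + ⋯ + V*_d) ∩ (V_i + ⋯ + V_d)`. -/
def Uuu {V : Type*} [AddCommGroup V] [Module ℂ V] (P : TDPair V) (i : ℕ) : Submodule ℂ V :=
  (⨆ k ∈ Finset.Icc (P.d - i) P.d, P.Astar.eigenspace (P.ψ k)) ⊓
  (⨆ k ∈ Finset.Icc i P.d, P.A.eigenspace (P.θ k))



section TDAux

variable {V : Type*} [AddCommGroup V] [Module ℂ V]

/-- `V*₀ + ⋯ + V*_{i-1}` (so `XX 0 = ⊥`). -/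
def XX (P : TDPair V) (i : ℕ) : Submodule ℂ V :=
  ⨆ k ∈ Finset.range i, P.Astar.eigenspace (P.ψ k)

/-- `V_i + ⋯ + V_d` (so `YY (d+1) = ⊥`). -/
def YY (P : TDPair V) (i : ℕ) : Submodule ℂ V :=
  ⨆ k ∈ Finset.Icc i P.d, P.A.eigenspace (P.θ k)

def UU (P : TDPair V) (i : ℕ) : Submodule ℂ V := XX P (i + 1) ⊓ YY P i

def WW (P : TDPair V) (i : ℕ) : Submodule ℂ V := XX P i ⊓ YY P i

lemma Udu_eq_UU (P : TDPair V) (i : ℕ) : Udu P i = UU P i := rfl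

lemma XX_mono (P : TDPair V) {i j : ℕ} (h : i ≤ j) : XX P i ≤ XX P j :=
  biSup_mono fun k hk => Finset.mem_range.mpr (lt_of_lt_of_le (Finset.mem_range.mp hk) h)

lemma YY_anti (P : TDPair V) {i j : ℕ} (h : i ≤ j) : YY P j ≤ YY P i :=
  biSup_mono fun k hk => by
    rw [Finset.mem_Icc] at *; omega

lemma XX_zero (P : TDPair V) : XX P 0 = ⊥ := by simp [XX]

lemma YY_succ_top (P : TDPair V) : YY P (P.d + 1) = ⊥ := by
  rw [YY, Finset.Icc_eq_empty (by omega)]; simp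

lemma YY_zero (P : TDPair V) : YY P 0 = ⊤ := by
  have h : Finset.Icc 0 P.d = Finset.range (P.d + 1) := by
    ext k; simp [Nat.lt_succ_iff]
  rw [YY, h]; exact P.diagA

lemma XX_dtop (P : TDPair V) (hdd : P.δ = P.d) : XX P (P.d + 1) = ⊤ := by
  have h := P.diagAstar; rw [hdd] at h; exact h

lemma eig_le_XX (P : TDPair V) {k i : ℕ} (h : k < i) :
    P.Astar.eigenspace (P.ψ k) ≤ XX P i := by
  rw [XX]; exact le_iSup_of_le k (le_iSup_of_le (Finset.mem_range.mpr h) le_rfl)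

lemma eig_le_YY (P : TDPair V) {k i : ℕ} (h1 : i ≤ k) (h2 : k ≤ P.d) :
    P.A.eigenspace (P.θ k) ≤ YY P i := by
  rw [YY]; exact le_iSup_of_le k (le_iSup_of_le (Finset.mem_Icc.mpr ⟨h1, h2⟩) le_rfl)

lemma evSp_le_XX (P : TDPair V) {j i : ℕ} (h : j < i) :
    evSp P.Astar P.ψ P.δ j ≤ XX P i := by
  rw [evSp]; split
  · exact eig_le_XX P h
  · exact bot_le

lemma evSp_le_YY (P : TDPair V) {j i : ℕ} (h : i ≤ j) :
    evSp P.A P.θ P.d j ≤ YY P i := by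
  rw [evSp]; split
  · exact eig_le_YY P h ‹_›
  · exact bot_le

lemma map_shift_eig (f : Module.End ℂ V) (c μ : ℂ) :
    Submodule.map (f - c • 1) (f.eigenspace μ) ≤ f.eigenspace μ := by
  rw [Submodule.map_le_iff_le_comap]
  intro v hv
  have h : f v = μ • v := Module.End.mem_eigenspace_iff.mp hv
  have h2 : (f - c • 1) v = (μ - c) • v := by
    simp [LinearMap.sub_apply, h, sub_smul]
  simp only [Submodule.mem_comap, h2]
  exact Submodule.smul_mem _ _ hv

lemma map_shift_eig_self (f : Module.End ℂ V) (μ : ℂ) :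
    Submodule.map (f - μ • 1) (f.eigenspace μ) = ⊥ := by
  rw [Submodule.eq_bot_iff]
  rintro x ⟨v, hv, rfl⟩
  have h : f v = μ • v := Module.End.mem_eigenspace_iff.mp hv
  simp [LinearMap.sub_apply, h]

lemma map_shift_le (f : Module.End ℂ V) (c : ℂ) (p : Submodule ℂ V) :
    Submodule.map (f - c • 1) p ≤ Submodule.map f p ⊔ p := by
  rintro x ⟨v, hv, rfl⟩
  have h : (f - c • 1) v = f v - c • v := by
    simp [LinearMap.sub_apply]
  rw [h]
  exact Submodule.sub_mem _ (Submodule.mem_sup_left ⟨v, hv, rfl⟩)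
    (Submodule.mem_sup_right (Submodule.smul_mem _ _ hv))

lemma map_le_shift (f : Module.End ℂ V) (c : ℂ) (p : Submodule ℂ V) :
    Submodule.map f p ≤ Submodule.map (f - c • 1) p ⊔ p := by
  rintro x ⟨v, hv, rfl⟩
  have h : f v = (f - c • 1) v + c • v := by
    simp [LinearMap.sub_apply]
  rw [h]
  exact Submodule.add_mem _ (Submodule.mem_sup_left ⟨v, hv, rfl⟩)
    (Submodule.mem_sup_right (Submodule.smul_mem _ _ hv))

lemma map_A_XX (P : TDPair V) (hdd : P.δ = P.d) {i : ℕ} (hi : i ≤ P.d + 1) :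
    Submodule.map P.A (XX P i) ≤ XX P (i + 1) := by
  rw [XX]
  simp only [Submodule.map_iSup]
  apply iSup₂_le
  intro k hk
  rw [Finset.mem_range] at hk
  have hkd : k ≤ P.δ := by omega
  have h1 : evSp P.Astar P.ψ P.δ k = P.Astar.eigenspace (P.ψ k) := if_pos hkd
  have h2 := P.triAstar k hkd
  rw [h1] at h2
  exact h2.trans (sup_le (sup_le (evSp_le_XX P (by omega)) (eig_le_XX P (by omega)))
    (evSp_le_XX P (by omega)))

lemma map_As_YY (P : TDPair V) (i : ℕ) :
    Submodule.map P.Astar (YY P i) ≤ YY P (i - 1) := by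
  rw [YY]
  simp only [Submodule.map_iSup]
  apply iSup₂_le
  intro k hk
  rw [Finset.mem_Icc] at hk
  have h1 : evSp P.A P.θ P.d k = P.A.eigenspace (P.θ k) := if_pos hk.2
  have h2 := P.triA k hk.2
  rw [h1] at h2
  exact h2.trans (sup_le (sup_le (evSp_le_YY P (by omega)) (eig_le_YY P (by omega) hk.2))
    (evSp_le_YY P (by omega)))

lemma map_shift_XX (P : TDPair V) (i : ℕ) :
    Submodule.map (P.Astar - P.ψ i • 1) (XX P (i + 1)) ≤ XX P i := by
  rw [XX]
  simp only [Submodule.map_iSup]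
  apply iSup₂_le
  intro k hk
  rw [Finset.mem_range] at hk
  rcases eq_or_lt_of_le (Nat.lt_succ_iff.mp hk) with h | h
  · subst h
    rw [map_shift_eig_self]; exact bot_le
  · exact (map_shift_eig _ _ _).trans (eig_le_XX P h)

lemma map_shift_YY (P : TDPair V) (i : ℕ) :
    Submodule.map (P.A - P.θ i • 1) (YY P i) ≤ YY P (i + 1) := by
  rw [YY]
  simp only [Submodule.map_iSup]
  apply iSup₂_le
  intro k hk
  rw [Finset.mem_Icc] at hk
  rcases eq_or_lt_of_le hk.1 with h | h
  · subst h
    rw [map_shift_eig_self]; exact bot_le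
  · exact (map_shift_eig _ _ _).trans (eig_le_YY P h hk.2)

lemma map_shiftA_UU (P : TDPair V) (hdd : P.δ = P.d) {i : ℕ} (hi : i ≤ P.d) :
    Submodule.map (P.A - P.θ i • 1) (UU P i) ≤ UU P (i + 1) := by
  refine le_trans (Submodule.map_inf_le _) (inf_le_inf ?_ ?_)
  · exact (map_shift_le _ _ _).trans
      (sup_le (map_A_XX P hdd (by omega)) (XX_mono P (by omega)))
  · exact map_shift_YY P i

lemma map_shiftAs_UU (P : TDPair V) (i : ℕ) :
    Submodule.map (P.Astar - P.ψ i • 1) (UU P i) ≤ XX P i ⊓ YY P (i - 1) := by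
  refine le_trans (Submodule.map_inf_le _) (inf_le_inf ?_ ?_)
  · exact map_shift_XX P i
  · exact (map_shift_le _ _ _).trans
      (sup_le (map_As_YY P i) (YY_anti P (by omega)))

lemma map_shiftA_WW (P : TDPair V) (hdd : P.δ = P.d) {i : ℕ} (hi : i ≤ P.d + 1) :
    Submodule.map (P.A - P.θ i • 1) (WW P i) ≤ WW P (i + 1) := by
  refine le_trans (Submodule.map_inf_le _) (inf_le_inf ?_ ?_)
  · exact (map_shift_le _ _ _).trans
      (sup_le (map_A_XX P hdd hi) (XX_mono P (by omega)))
  · exact map_shift_YY P i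

lemma map_shiftAs_WW (P : TDPair V) (i : ℕ) :
    Submodule.map (P.Astar - P.ψ (i - 1) • 1) (WW P i) ≤ WW P (i - 1) := by
  rcases i with _ | j
  · rw [WW, XX_zero, bot_inf_eq, Submodule.map_bot]
  · refine le_trans (Submodule.map_inf_le _) (inf_le_inf ?_ ?_)
    · have := map_shift_XX P j
      simpa using this
    · exact (map_shift_le _ _ _).trans
        (sup_le (map_As_YY P _) (YY_anti P (Nat.sub_le _ _)))


lemma UU_top (P : TDPair V) : UU P (P.d + 1) = ⊥ := by
  rw [UU, YY_succ_top, inf_bot_eq]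

lemma WW_top (P : TDPair V) : WW P (P.d + 1) = ⊥ := by
  rw [WW, YY_succ_top, inf_bot_eq]

lemma WW_bot (P : TDPair V) (hdd : P.δ = P.d) {i : ℕ} (hi : i ≤ P.d + 1) :
    WW P i = ⊥ := by
  set K : Submodule ℂ V := ⨆ j ∈ Finset.range (P.d + 2), WW P j with hK
  have hle : ∀ j, j ∈ Finset.range (P.d + 2) → WW P j ≤ K := fun j hj => by
    rw [hK]; exact le_iSup_of_le j (le_iSup_of_le hj le_rfl)
  have hKA : Submodule.map P.A K ≤ K := by
    rw [hK]
    simp only [Submodule.map_iSup]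
    apply iSup₂_le
    intro j hj
    rw [Finset.mem_range] at hj
    by_cases hjd : j ≤ P.d
    · exact (map_le_shift _ (P.θ j) _).trans (sup_le
        ((map_shiftA_WW P hdd (by omega)).trans (hle _ (by simp only [Finset.mem_range]; omega)))
        (hle _ (by simp only [Finset.mem_range]; omega)))
    · have hj' : j = P.d + 1 := by omega
      subst hj'
      rw [WW_top, Submodule.map_bot]
      exact bot_le
  have hKAs : Submodule.map P.Astar K ≤ K := by
    rw [hK]
    simp only [Submodule.map_iSup]
    apply iSup₂_le
    intro j hj
    rw [Finset.mem_range] at hj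
    exact (map_le_shift _ (P.ψ (j - 1)) _).trans (sup_le
      ((map_shiftAs_WW P j).trans (hle _ (by simp only [Finset.mem_range]; omega)))
      (hle _ (by simp only [Finset.mem_range]; omega)))
  have hKX : K ≤ XX P P.d := by
    rw [hK]
    apply iSup₂_le
    intro j hj
    rw [Finset.mem_range] at hj
    by_cases hjd : j ≤ P.d
    · exact inf_le_left.trans (XX_mono P hjd)
    · have hj' : j = P.d + 1 := by omega
      subst hj'; rw [WW_top]; exact bot_le
  rcases P.irred K hKA hKAs with h | h
  · exact le_bot_iff.mp ((hle i (by simp only [Finset.mem_range]; omega)).trans h.le)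
  · exfalso
    have hXtop : XX P P.d = ⊤ := top_unique (h ▸ hKX)
    have hdisj : Disjoint (P.Astar.eigenspace (P.ψ P.d)) (XX P P.d) := by
      have hne : P.ψ P.d ∉ P.ψ '' {k | k < P.d} := by
        rintro ⟨k, hk, hkeq⟩
        have hkd : (k : ℕ) < P.d := hk
        have := P.ψ_inj k (by omega) P.d (by omega) hkeq
        omega
      have h1 := (Module.End.eigenspaces_iSupIndep P.Astar).disjoint_biSup hne
      refine h1.mono_right ?_
      rw [XX]
      apply iSup₂_le
      intro k hk
      rw [Finset.mem_range] at hk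
      exact le_iSup_of_le (P.ψ k) (le_iSup_of_le ⟨k, hk, rfl⟩ le_rfl)
    refine P.eigAstar_ne P.d (by omega) ?_
    have heq : P.Astar.eigenspace (P.ψ P.d)
        = P.Astar.eigenspace (P.ψ P.d) ⊓ XX P P.d := by
      rw [hXtop, inf_top_eq]
    rw [heq]
    exact disjoint_iff.mp hdisj

lemma S_top (P : TDPair V) (hdd : P.δ = P.d) :
    (⨆ j ∈ Finset.range (P.d + 2), UU P j) = ⊤ := by
  set S : Submodule ℂ V := ⨆ j ∈ Finset.range (P.d + 2), UU P j with hS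
  have hle : ∀ j, j ∈ Finset.range (P.d + 2) → UU P j ≤ S := fun j hj => by
    rw [hS]; exact le_iSup_of_le j (le_iSup_of_le hj le_rfl)
  have hSA : Submodule.map P.A S ≤ S := by
    rw [hS]
    simp only [Submodule.map_iSup]
    apply iSup₂_le
    intro j hj
    rw [Finset.mem_range] at hj
    by_cases hjd : j ≤ P.d
    · exact (map_le_shift _ (P.θ j) _).trans (sup_le
        ((map_shiftA_UU P hdd hjd).trans (hle _ (by simp only [Finset.mem_range]; omega)))
        (hle _ (by simp only [Finset.mem_range]; omega)))
    · have hj' : j = P.d + 1 := by omega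
      subst hj'
      rw [UU_top, Submodule.map_bot]
      exact bot_le
  have hSAs : Submodule.map P.Astar S ≤ S := by
    rw [hS]
    simp only [Submodule.map_iSup]
    apply iSup₂_le
    intro j hj
    rw [Finset.mem_range] at hj
    have h2 : XX P j ⊓ YY P (j - 1) ≤ S := by
      rcases j with _ | m
      · rw [XX_zero, bot_inf_eq]; exact bot_le
      · exact hle m (by simp only [Finset.mem_range]; omega)
    exact (map_le_shift _ (P.ψ j) _).trans (sup_le
      ((map_shiftAs_UU P j).trans h2)
      (hle _ (by simp only [Finset.mem_range]; omega)))
  rcases P.irred S hSA hSAs with h | h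
  · exfalso
    refine P.eigAstar_ne 0 (by omega) ?_
    have h0 : P.Astar.eigenspace (P.ψ 0) ≤ UU P 0 := by
      refine le_inf (eig_le_XX P (by omega)) ?_
      rw [YY_zero]; exact le_top
    have := (h0.trans (hle 0 (by simp only [Finset.mem_range]; omega))).trans h.le
    exact le_bot_iff.mp this
  · exact h

end TDAux

/-- The `(↓,↓)/(↑,↓)/(↓,↑)/(↑,↑)`-split decomposition:
`V = U_0 + U_1 + ⋯ + U_d` is a direct sum. -/
theorem tdpair_split_du {V : Type*} [AddCommGroup V] [Module ℂ V]
    [FiniteDimensional ℂ V] (hV : 0 < Module.finrank ℂ V) (P : TDPair V)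
    (hdd : P.δ = P.d) :
    iSupIndep (fun i : Fin (P.d + 1) => Udu P i) ∧
      (⨆ i : Fin (P.d + 1), Udu P i) = ⊤ := by
  constructor
  · intro i
    have hsup : (⨆ (j : Fin (P.d + 1)) (_ : j ≠ i), Udu P (j : ℕ))
        ≤ XX P (i : ℕ) ⊔ YY P ((i : ℕ) + 1) := by
      apply iSup₂_le
      intro j hj
      have hji : (j : ℕ) ≠ (i : ℕ) := fun h => hj (Fin.ext h)
      rw [Udu_eq_UU, UU]
      rcases lt_or_gt_of_ne hji with h | h
      · exact le_sup_left.trans' (inf_le_left.trans (XX_mono P (by omega)))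
      · exact le_sup_right.trans' (inf_le_right.trans (YY_anti P (by omega)))
    refine Disjoint.mono_right hsup ?_
    rw [Submodule.disjoint_def]
    intro x hxU hxs
    have hxU' : x ∈ UU P (i : ℕ) := hxU
    rw [UU, Submodule.mem_inf] at hxU'
    obtain ⟨a, ha, b, hb, hab⟩ := Submodule.mem_sup.mp hxs
    have hay : a ∈ YY P (i : ℕ) := by
      have hxab : a = x - b := by rw [← hab, add_sub_cancel_right]
      rw [hxab]
      exact Submodule.sub_mem _ hxU'.2 (YY_anti P (Nat.le_succ _) hb)
    have ha0 : a = 0 := by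
      have hmem : a ∈ WW P (i : ℕ) := Submodule.mem_inf.mpr ⟨ha, hay⟩
      rw [WW_bot P hdd i.isLt.le] at hmem
      simpa using hmem
    have hxb : x = b := by rw [← hab, ha0, zero_add]
    have hmem : x ∈ WW P ((i : ℕ) + 1) := Submodule.mem_inf.mpr ⟨hxU'.1, hxb ▸ hb⟩
    rw [WW_bot P hdd i.isLt] at hmem
    simpa using hmem
  · rw [eq_top_iff, ← S_top P hdd]
    apply iSup₂_le
    intro j hj
    rw [Finset.mem_range] at hj
    by_cases hjd : j ≤ P.d
    · exact le_iSup_of_le ⟨j, by omega⟩ (le_of_eq (Udu_eq_UU P j).symm)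
    · have hj' : j = P.d + 1 := by omega
      subst hj'; rw [UU_top]; exact bot_le

end
end

section
/- Let A, A* be a tridiagonal pair on V with diameter d, and suppose there exists a positive definite Hermitian form (·,·) on V satisfying (Au,v) = (u,Av) and (A*u,v) = (u,A*v) for all u,v ∈ V. Then for 0 ≤ i,j ≤ d with i + j ≠ d, the subspaces U^{↓↑}_i = (V*_0 + ⋯ + V*_i) ∩ (V_i + ⋯ + V_d) and U^{↑↓}_j = (V*_{d−j} + ⋯ + V*_d) ∩ (V_0 + ⋯ + V_{d−j}) are orthogonal with respect to (·,·). -/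
noncomputable section

open Module

section Aux
variable {V : Type*} [AddCommGroup V] [Module ℂ V]

lemma form_zero_left' (form : V → V → ℂ)
    (form_add : ∀ u v w : V, form (u + v) w = form u w + form v w) (v : V) :
    form 0 v = 0 := by
  have h := form_add 0 0 v
  rw [add_zero] at h
  exact (left_eq_add.mp h)

lemma form_orth_eig (form : V → V → ℂ)
    (form_add : ∀ u v w : V, form (u + v) w = form u w + form v w)
    (form_smul : ∀ (a : ℂ) (u v : V), form (a • u) v = a * form u v)
    (form_conj : ∀ u v : V, form v u = starRingEnd ℂ (form u v))
    (form_pos : ∀ v : V, v ≠ 0 → 0 < (form v v).re)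
    (B : Module.End ℂ V) (form_B : ∀ u v : V, form (B u) v = form u (B v))
    (μ ν : ℂ) (hμν : μ ≠ ν) (u v : V)
    (hu : u ∈ B.eigenspace μ) (hv : v ∈ B.eigenspace ν) :
    form u v = 0 := by
  have zero_left := form_zero_left' form form_add
  have zero_right : ∀ w : V, form w 0 = 0 := by
    intro w; rw [form_conj 0 w, zero_left, map_zero]
  rcases eq_or_ne u 0 with rfl | hu0
  · exact zero_left v
  rcases eq_or_ne v 0 with rfl | hv0
  · exact zero_right u
  -- eigenvalues of nonzero eigenvectors are real
  have real_ev : ∀ (ρ : ℂ) (w : V), w ≠ 0 → w ∈ B.eigenspace ρ → starRingEnd ℂ ρ = ρ := by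
    intro ρ w hw hwρ
    have hBw : B w = ρ • w := Module.End.mem_eigenspace_iff.mp hwρ
    have hc : starRingEnd ℂ (form w w) = form w w := (form_conj w w).symm
    have h1 : form (B w) w = ρ * form w w := by rw [hBw, form_smul]
    have h2 : form w (B w) = starRingEnd ℂ ρ * form w w := by
      have : form (B w) w = starRingEnd ℂ (form w (B w)) := form_conj w (B w)
      have h3 : form w (B w) = starRingEnd ℂ (form (B w) w) := by
        rw [this]; simp
      rw [h3, h1, map_mul, hc]
    have h4 : ρ * form w w = starRingEnd ℂ ρ * form w w := by
      rw [← h1, ← h2, form_B]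
    have hne : form w w ≠ 0 := by
      intro h; have := form_pos w hw; rw [h] at this; simp at this
    exact (mul_right_cancel₀ hne h4.symm)
  have hμr := real_ev μ u hu0 hu
  have hνr := real_ev ν v hv0 hv
  have hBu : B u = μ • u := Module.End.mem_eigenspace_iff.mp hu
  have hBv : B v = ν • v := Module.End.mem_eigenspace_iff.mp hv
  have key : μ * form u v = ν * form u v := by
    have h1 : form (B u) v = μ * form u v := by rw [hBu, form_smul]
    have h2 : form u (B v) = ν * form u v := by
      have h3 : form u (B v) = starRingEnd ℂ (form (B v) u) := form_conj (B v) u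
      rw [h3, hBv, form_smul, map_mul, hνr, ← form_conj]
    rw [← h1, ← h2, form_B]
  have := sub_eq_zero.mpr key
  rw [← sub_mul] at this
  exact (mul_eq_zero.mp this).resolve_left (sub_ne_zero.mpr hμν)

lemma form_orth_sup (form : V → V → ℂ)
    (form_add : ∀ u v w : V, form (u + v) w = form u w + form v w)
    (form_smul : ∀ (a : ℂ) (u v : V), form (a • u) v = a * form u v)
    (form_conj : ∀ u v : V, form v u = starRingEnd ℂ (form u v))
    (form_pos : ∀ v : V, v ≠ 0 → 0 < (form v v).re)
    (B : Module.End ℂ V) (form_B : ∀ u v : V, form (B u) v = form u (B v))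
    (θ : ℕ → ℂ) (S T : Finset ℕ)
    (hST : ∀ k ∈ S, ∀ l ∈ T, θ k ≠ θ l) :
    ∀ u ∈ (⨆ k ∈ S, B.eigenspace (θ k)), ∀ v ∈ (⨆ k ∈ T, B.eigenspace (θ k)),
      form u v = 0 := by
  have zero_left := form_zero_left' form form_add
  have zero_right : ∀ w : V, form w 0 = 0 := by
    intro w; rw [form_conj 0 w, zero_left, map_zero]
  have add_right : ∀ w x y : V, form w (x + y) = form w x + form w y := by
    intro w x y
    rw [form_conj (x + y) w, form_add, map_add, ← form_conj, ← form_conj]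
  intro u hu
  rw [iSup_subtype'] at hu
  induction hu using Submodule.iSup_induction' with
  | mem k x hx =>
    intro v hv
    rw [iSup_subtype'] at hv
    induction hv using Submodule.iSup_induction' with
    | mem l y hy =>
      exact form_orth_eig form form_add form_smul form_conj form_pos B form_B _ _
        (hST k.1 k.2 l.1 l.2) x y hx hy
    | zero => exact zero_right x
    | add y z _ _ hy hz => rw [add_right, hy, hz, add_zero]
  | zero => intro v hv; exact zero_left v
  | add x y _ _ hx hy =>
    intro v hv
    rw [form_add, hx v hv, hy v hv, add_zero]

end Aux

theorem tdpair_orth_du_ud {V : Type*} [AddCommGroup V] [Module ℂ V]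
    [FiniteDimensional ℂ V] (hV : 0 < Module.finrank ℂ V) (P : TDPair V)
    (hdd : P.δ = P.d)
    (form : V → V → ℂ)
    (form_add : ∀ u v w : V, form (u + v) w = form u w + form v w)
    (form_smul : ∀ (a : ℂ) (u v : V), form (a • u) v = a * form u v)
    (form_conj : ∀ u v : V, form v u = starRingEnd ℂ (form u v))
    (form_pos : ∀ v : V, v ≠ 0 → 0 < (form v v).re)
    (form_A : ∀ u v : V, form (P.A u) v = form u (P.A v))
    (form_Astar : ∀ u v : V, form (P.Astar u) v = form u (P.Astar v)) :
    ∀ i ≤ P.d, ∀ j ≤ P.d, i + j ≠ P.d →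
      ∀ u ∈ Udu P i, ∀ v ∈ Uud P j, form u v = 0 := by
  intro i hi j hj hij u hu v hv
  rcases lt_or_gt_of_ne hij with hlt | hgt
  · -- i + j < d : A*-index sets {0..i} and {d-j..d} are disjoint
    refine form_orth_sup form form_add form_smul form_conj form_pos P.Astar form_Astar
      P.ψ (Finset.range (i + 1)) (Finset.Icc (P.d - j) P.d) ?_ u hu.1 v hv.1
    intro k hk l hl hkl
    rw [Finset.mem_range] at hk
    rw [Finset.mem_Icc] at hl
    have hk' : k ≤ P.δ := by omega
    have hl' : l ≤ P.δ := by omega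
    have := P.ψ_inj k hk' l hl' hkl
    omega
  · -- i + j > d : A-index sets {i..d} and {0..d-j} are disjoint
    refine form_orth_sup form form_add form_smul form_conj form_pos P.A form_A
      P.θ (Finset.Icc i P.d) (Finset.range (P.d - j + 1)) ?_ u hu.2 v hv.2
    intro k hk l hl hkl
    rw [Finset.mem_Icc] at hk
    rw [Finset.mem_range] at hl
    have := P.θ_inj k hk.2 l (by omega) hkl
    omega


end
end
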